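/- For every n ≥ 1, the maximum cardinality of a domino configuration in the square S_n equals ξ(n), where ξ(n) = (n−1)(n+3)/6 if n ≡ 1 or 3 (mod 6), ξ(n) = (n+1)²/6 if n ≡ 5 (mod 6), ξ(n) = n(n+2)/6 if n ≡ 0 or 4 (mod 6), and ξ(n) = (n(n+2) − 2)/6 if n ≡ 2 (mod 6). That is: there exists a domino configuration in S_n of cardinality ξ(n), and every domino configuration in S_n has cardinality at most ξ(n). -/

import Mathlib

/-- The Moore neighborhood of range 1 of a point `ω ∈ ℤ²`. -/
def moore (ω : ℤ × ℤ) : Set (ℤ × ℤ) :=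
  {x | |x.1 - ω.1| ≤ 1 ∧ |x.2 - ω.2| ≤ 1}

/-- The kernel of a domino `(ω, e)`: the two cells `ω` and `ω + e`. -/
def kernel (d : (ℤ × ℤ) × (ℤ × ℤ)) : Set (ℤ × ℤ) :=
  {d.1, d.1 + d.2}

/-- The footprint of a domino `(ω, e)`: the union of the Moore neighborhoods
of its two kernel cells (kernel together with the 10-cell hull). -/
def footprint (d : (ℤ × ℤ) × (ℤ × ℤ)) : Set (ℤ × ℤ) :=
  moore d.1 ∪ moore (d.1 + d.2)

/-- A domino configuration in the square `S_n`: a finite set of dominos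
(each a pair `(ω, e)` with `e ∈ {(1,0), (0,1)}`) whose kernels lie in
`{1, …, n} × {1, …, n}`, such that the footprint of any domino is disjoint
from the kernel of any other domino (hull–kernel exclusion). -/
def IsSquareConfig (n : ℕ) (C : Finset ((ℤ × ℤ) × (ℤ × ℤ))) : Prop :=
  (∀ d ∈ C, d.2 = (1, 0) ∨ d.2 = (0, 1)) ∧
  (∀ d ∈ C, kernel d ⊆ {p : ℤ × ℤ | 1 ≤ p.1 ∧ p.1 ≤ (n : ℤ) ∧ 1 ≤ p.2 ∧ p.2 ≤ (n : ℤ)}) ∧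
  (∀ d ∈ C, ∀ d' ∈ C, d ≠ d' → footprint d ∩ kernel d' = ∅)

/-- The maximal number of dominos in the square `S_n`. -/
def xi (n : ℕ) : ℕ :=
  if n % 6 = 1 ∨ n % 6 = 3 then (n - 1) * (n + 3) / 6
  else if n % 6 = 5 then (n + 1) ^ 2 / 6
  else if n % 6 = 2 then (n * (n + 2) - 2) / 6
  else n * (n + 2) / 6

/-! ### Auxiliary machinery: boxes -/

/-- The 2×3 "box" of a domino: the kernel together with the lower-left closure. -/
noncomputable def box (d : (ℤ × ℤ) × (ℤ × ℤ)) : Finset (ℤ × ℤ) := Finset.Icc (d.1 - (1,1)) (d.1 + d.2)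

/-- Valid orientation of a domino. -/
def Ori (d : (ℤ × ℤ) × (ℤ × ℤ)) : Prop := d.2 = (1, 0) ∨ d.2 = (0, 1)

lemma mem_box {d : (ℤ × ℤ) × (ℤ × ℤ)} {p : ℤ × ℤ} :
    p ∈ box d ↔ (d.1.1 - 1 ≤ p.1 ∧ d.1.2 - 1 ≤ p.2) ∧ (p.1 ≤ d.1.1 + d.2.1 ∧ p.2 ≤ d.1.2 + d.2.2) := by
  simp [box, Finset.mem_Icc, Prod.le_def]

lemma card_box {d : (ℤ × ℤ) × (ℤ × ℤ)} (h : Ori d) : (box d).card = 6 := by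
  obtain ⟨⟨a, b⟩, e⟩ := d
  rcases h with rfl | rfl <;>
    simp [box, Finset.card_Icc_prod, Int.card_Icc, Prod.ext_iff] <;> omega

lemma base_mem_box {d : (ℤ × ℤ) × (ℤ × ℤ)} (h : Ori d) : d.1 ∈ box d := by
  rcases h with h | h <;> rw [mem_box, h] <;> constructor <;> constructor <;> simp

/-- Every point of the box is within Chebyshev distance 1 of a kernel cell above-right of it. -/
lemma key {d : (ℤ × ℤ) × (ℤ × ℤ)} {p : ℤ × ℤ} (he : Ori d) (hp : p ∈ box d) :
    ∃ k, (k = d.1 ∨ k = d.1 + d.2) ∧ p.1 ≤ k.1 ∧ k.1 ≤ p.1 + 1 ∧ p.2 ≤ k.2 ∧ k.2 ≤ p.2 + 1 := by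
  obtain ⟨⟨a, b⟩, e⟩ := d
  rw [mem_box] at hp
  rcases he with rfl | rfl <;> simp only [Prod.fst, Prod.snd] at hp
  · by_cases hc : p.1 ≤ a
    · exact ⟨(a, b), Or.inl rfl, by omega, by omega, by omega, by omega⟩
    · refine ⟨(a + 1, b), Or.inr (by simp [Prod.ext_iff]), by omega, by omega, by omega, by omega⟩
  · by_cases hc : p.2 ≤ b
    · exact ⟨(a, b), Or.inl rfl, by omega, by omega, by omega, by omega⟩
    · refine ⟨(a, b + 1), Or.inr (by simp [Prod.ext_iff]), by omega, by omega, by omega, by omega⟩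

/-- Any point Chebyshev-below-left (within 1) of a kernel cell lies in the box. -/
lemma near_box {d : (ℤ × ℤ) × (ℤ × ℤ)} {c z : ℤ × ℤ} (he : Ori d)
    (hc : c = d.1 ∨ c = d.1 + d.2) (h1 : c.1 - 1 ≤ z.1) (h2 : z.1 ≤ c.1)
    (h3 : c.2 - 1 ≤ z.2) (h4 : z.2 ≤ c.2) : z ∈ box d := by
  obtain ⟨⟨a, b⟩, e⟩ := d
  rw [mem_box]
  rcases he with rfl | rfl <;> rcases hc with rfl | rfl <;> simp_all <;> omega

/-- Exclusion implies disjoint boxes. -/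
lemma disjoint_of_excl {d d' : (ℤ × ℤ) × (ℤ × ℤ)} (he : Ori d) (he' : Ori d')
    (hx : footprint d ∩ kernel d' = ∅) : Disjoint (box d) (box d') := by
  rw [Finset.disjoint_left]
  intro p hp hp'
  obtain ⟨k, hk, hk1, hk2, hk3, hk4⟩ := key he hp
  obtain ⟨k', hk', hk1', hk2', hk3', hk4'⟩ := key he' hp'
  have hmem : k' ∈ footprint d ∩ kernel d' := by
    refine ⟨?_, ?_⟩
    · rcases hk with rfl | rfl
      · exact Or.inl ⟨by rw [abs_le]; omega, by rw [abs_le]; omega⟩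
      · exact Or.inr ⟨by rw [abs_le]; omega, by rw [abs_le]; omega⟩
    · rcases hk' with rfl | rfl
      · exact Or.inl rfl
      · exact Or.inr rfl
  rw [hx] at hmem
  exact hmem

/-- Disjoint boxes implies exclusion. -/
lemma excl_of_disjoint {d d' : (ℤ × ℤ) × (ℤ × ℤ)} (he : Ori d) (he' : Ori d')
    (hd : Disjoint (box d) (box d')) : footprint d ∩ kernel d' = ∅ := by
  rw [Set.eq_empty_iff_forall_notMem]
  rintro x ⟨hf, hk⟩
  have hc : ∃ c, (c = d.1 ∨ c = d.1 + d.2) ∧ |x.1 - c.1| ≤ 1 ∧ |x.2 - c.2| ≤ 1 := by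
    rcases hf with h | h
    · exact ⟨d.1, Or.inl rfl, h.1, h.2⟩
    · exact ⟨d.1 + d.2, Or.inr rfl, h.1, h.2⟩
  obtain ⟨c, hcmem, hc1, hc2⟩ := hc
  rw [abs_le] at hc1 hc2
  have hkx : x = d'.1 ∨ x = d'.1 + d'.2 := hk
  set q : ℤ × ℤ := (min x.1 c.1, min x.2 c.2) with hq
  have hq1 : q ∈ box d := near_box he hcmem (by simp [hq]; omega) (by simp [hq])
    (by simp [hq]; omega) (by simp [hq])
  have hq2 : q ∈ box d' := near_box he' hkx (by simp [hq]; omega) (by simp [hq])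
    (by simp [hq]; omega) (by simp [hq])
  exact Finset.disjoint_left.mp hd hq1 hq2

/-! ### Good packings -/

/-- A good packing: dominoes with valid orientations whose boxes lie inside
`Icc a b` and are pairwise disjoint. -/
def Good (a b : ℤ × ℤ) (C : Finset ((ℤ × ℤ) × (ℤ × ℤ))) : Prop :=
  (∀ d ∈ C, Ori d) ∧ (∀ d ∈ C, box d ⊆ Finset.Icc a b) ∧
  (∀ d ∈ C, ∀ d' ∈ C, d ≠ d' → Disjoint (box d) (box d'))

instance : DecidablePred Ori := fun d => by unfold Ori; infer_instance
noncomputable instance (a b C) : Decidable (Good a b C) := by unfold Good; infer_instance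

lemma good_union {A B a b a' b' : ℤ × ℤ} {C1 C2 : Finset ((ℤ × ℤ) × (ℤ × ℤ))}
    (h1 : Good a b C1) (h2 : Good a' b' C2)
    (hd : Disjoint (Finset.Icc a b) (Finset.Icc a' b'))
    (s1 : Finset.Icc a b ⊆ Finset.Icc A B) (s2 : Finset.Icc a' b' ⊆ Finset.Icc A B) :
    Good A B (C1 ∪ C2) ∧ (C1 ∪ C2).card = C1.card + C2.card := by
  obtain ⟨o1, r1, p1⟩ := h1
  obtain ⟨o2, r2, p2⟩ := h2
  have hcross : ∀ d ∈ C1, ∀ d' ∈ C2, Disjoint (box d) (box d') := by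
    intro d hd1 d' hd2
    exact Finset.disjoint_of_subset_left (r1 d hd1) (Finset.disjoint_of_subset_right (r2 d' hd2) hd)
  have hC : Disjoint C1 C2 := by
    rw [Finset.disjoint_left]
    intro d hd1 hd2
    have := hcross d hd1 d hd2
    rw [disjoint_self] at this
    exact absurd this (Finset.nonempty_iff_ne_empty.mp ⟨d.1, base_mem_box (o1 d hd1)⟩)
  refine ⟨⟨?_, ?_, ?_⟩, Finset.card_union_of_disjoint hC⟩
  · intro d hd
    rcases Finset.mem_union.mp hd with h | h
    exacts [o1 d h, o2 d h]
  · intro d hd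
    rcases Finset.mem_union.mp hd with h | h
    exacts [(r1 d h).trans s1, (r2 d h).trans s2]
  · intro d hd d' hd' hne
    rcases Finset.mem_union.mp hd with h | h <;> rcases Finset.mem_union.mp hd' with h' | h'
    · exact p1 d h d' h' hne
    · exact hcross d h d' h'
    · exact (hcross d' h' d h).symm
    · exact p2 d h d' h' hne

/-- Translation of a domino. -/
def tr (v : ℤ × ℤ) (d : (ℤ × ℤ) × (ℤ × ℤ)) : (ℤ × ℤ) × (ℤ × ℤ) := (d.1 + v, d.2)

lemma tr_inj (v : ℤ × ℤ) : Function.Injective (tr v) := by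
  intro d d' h
  unfold tr at h
  obtain ⟨h1, h2⟩ := Prod.mk.injEq _ _ _ _ ▸ h
  exact Prod.ext (add_right_cancel h1) h2

lemma mem_box_tr {v d p} : p ∈ box (tr v d) ↔ (p.1 - v.1, p.2 - v.2) ∈ box d := by
  simp only [mem_box, tr]
  constructor <;> intro ⟨⟨a1, a2⟩, a3, a4⟩ <;>
    refine ⟨⟨?_, ?_⟩, ?_, ?_⟩ <;> simp_all [Prod.fst_add, Prod.snd_add] <;> omega

lemma good_tr {a b : ℤ × ℤ} {C : Finset ((ℤ × ℤ) × (ℤ × ℤ))} (h : Good a b C) (v : ℤ × ℤ) :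
    Good (a + v) (b + v) (C.image (tr v)) ∧ (C.image (tr v)).card = C.card := by
  obtain ⟨o, r, p⟩ := h
  refine ⟨⟨?_, ?_, ?_⟩, Finset.card_image_of_injective _ (tr_inj v)⟩
  · intro d hd
    obtain ⟨d0, hd0, rfl⟩ := Finset.mem_image.mp hd
    rcases o d0 hd0 with h | h <;> [left; right] <;> simpa [tr] using h
  · intro d hd q hq
    obtain ⟨d0, hd0, rfl⟩ := Finset.mem_image.mp hd
    have := r d0 hd0 (mem_box_tr.mp hq)
    simp only [Finset.mem_Icc, Prod.le_def] at this ⊢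
    simp only [Prod.fst_add, Prod.snd_add]
    simp at this
    omega
  · intro d hd d' hd' hne
    obtain ⟨d0, hd0, rfl⟩ := Finset.mem_image.mp hd
    obtain ⟨d0', hd0', rfl⟩ := Finset.mem_image.mp hd'
    have hne0 : d0 ≠ d0' := fun h => hne (h ▸ rfl)
    rw [Finset.disjoint_left]
    intro q hq hq'
    exact Finset.disjoint_left.mp (p d0 hd0 d0' hd0' hne0) (mem_box_tr.mp hq) (mem_box_tr.mp hq')

/-- Coordinate swap of a domino. -/
def sw (d : (ℤ × ℤ) × (ℤ × ℤ)) : (ℤ × ℤ) × (ℤ × ℤ) := (d.1.swap, d.2.swap)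

lemma sw_inj : Function.Injective sw := by
  intro d d' h
  unfold sw at h
  obtain ⟨h1, h2⟩ := Prod.mk.injEq _ _ _ _ ▸ h
  exact Prod.ext (Prod.swap_injective h1) (Prod.swap_injective h2)

lemma mem_box_sw {d p} : p ∈ box (sw d) ↔ p.swap ∈ box d := by
  simp only [mem_box, sw, Prod.fst_swap, Prod.snd_swap]
  tauto

lemma good_sw {a b : ℤ × ℤ} {C : Finset ((ℤ × ℤ) × (ℤ × ℤ))} (h : Good a b C) :
    Good a.swap b.swap (C.image sw) ∧ (C.image sw).card = C.card := by
  obtain ⟨o, r, p⟩ := h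
  refine ⟨⟨?_, ?_, ?_⟩, Finset.card_image_of_injective _ sw_inj⟩
  · intro d hd
    obtain ⟨d0, hd0, rfl⟩ := Finset.mem_image.mp hd
    rcases o d0 hd0 with h | h <;> [right; left] <;> simp [sw, h]
  · intro d hd q hq
    obtain ⟨d0, hd0, rfl⟩ := Finset.mem_image.mp hd
    have := r d0 hd0 (mem_box_sw.mp hq)
    simp only [Finset.mem_Icc, Prod.le_def, Prod.fst_swap, Prod.snd_swap] at this ⊢
    tauto
  · intro d hd d' hd' hne
    obtain ⟨d0, hd0, rfl⟩ := Finset.mem_image.mp hd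
    obtain ⟨d0', hd0', rfl⟩ := Finset.mem_image.mp hd'
    have hne0 : d0 ≠ d0' := fun h => hne (h ▸ rfl)
    rw [Finset.disjoint_left]
    intro q hq hq'
    exact Finset.disjoint_left.mp (p d0 hd0 d0' hd0' hne0) (mem_box_sw.mp hq) (mem_box_sw.mp hq')

lemma disjoint_Icc_x {a b c d : ℤ × ℤ} (h : b.1 < c.1) :
    Disjoint (Finset.Icc a b) (Finset.Icc c d) := by
  rw [Finset.disjoint_left]
  intro p hp hp'
  simp only [Finset.mem_Icc, Prod.le_def] at hp hp'
  omega

lemma disjoint_Icc_y {a b c d : ℤ × ℤ} (h : b.2 < c.2) :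
    Disjoint (Finset.Icc a b) (Finset.Icc c d) := by
  rw [Finset.disjoint_left]
  intro p hp hp'
  simp only [Finset.mem_Icc, Prod.le_def] at hp hp'
  omega

lemma Icc_mono {a b c d : ℤ × ℤ} (h1 : c.1 ≤ a.1) (h2 : c.2 ≤ a.2) (h3 : b.1 ≤ d.1)
    (h4 : b.2 ≤ d.2) : Finset.Icc a b ⊆ Finset.Icc c d := by
  intro p hp
  simp only [Finset.mem_Icc, Prod.le_def] at hp ⊢
  omega

/-! ### Strips -/

/-- A full tiling of the vertical strip `[0,5] × [0,h-1]` by `h` bricks. -/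
lemma strip : ∀ h : ℕ, 2 ≤ h → ∃ C, Good (0,0) (5, (h:ℤ)-1) C ∧ C.card = h := by
  intro h
  induction h using Nat.strong_induction_on with
  | _ h ih =>
    intro hh
    by_cases h2 : h = 2
    · subst h2
      exact ⟨{((1,1),(1,0)), ((4,1),(1,0))}, by decide, by decide⟩
    by_cases h3 : h = 3
    · subst h3
      exact ⟨{((1,1),(0,1)), ((3,1),(0,1)), ((5,1),(0,1))}, by decide, by decide⟩
    -- h ≥ 4
    obtain ⟨C, hC, hcard⟩ := ih (h - 2) (by omega) (by omega)
    obtain ⟨hC', hcard'⟩ := good_tr hC (0, 2)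
    have e1 : ((0,0) : ℤ × ℤ) + (0, 2) = (0, 2) := by simp
    have e2 : ((5, ((h-2:ℕ):ℤ)-1) + (0, 2) : ℤ × ℤ) = (5, (h:ℤ)-1) := by
      simp [Prod.ext_iff]
      omega
    rw [e1, e2] at hC'
    have hB : Good (0,0) (5,1) {((1,1),(1,0)), ((4,1),(1,0))} := by decide
    obtain ⟨hg, hc⟩ := good_union (A := (0,0)) (B := (5, (h:ℤ)-1)) hB hC'
      (disjoint_Icc_y (by norm_num)) (Icc_mono (by norm_num) (by norm_num) (by norm_num) (by omega))
      (Icc_mono (by norm_num) (by norm_num) (by norm_num) (by norm_num))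
    refine ⟨_, hg, ?_⟩
    have hcb : (({((1,1),(1,0)), ((4,1),(1,0))}) : Finset ((ℤ × ℤ) × (ℤ × ℤ))).card = 2 := by decide
    rw [hc, hcb, hcard', hcard]
    omega

/-! ### The optimal packing -/

lemma pack : ∀ n : ℕ, 1 ≤ n → ∃ C, Good (0,0) ((n:ℤ), (n:ℤ)) C ∧ C.card = (n+1)^2/6 := by
  intro n
  induction n using Nat.strong_induction_on with
  | _ n ih =>
    intro hn
    by_cases hc1 : n = 1
    · subst hc1; exact ⟨∅, by decide, by decide⟩
    by_cases hc2 : n = 2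
    · subst hc2; exact ⟨{((1,1),(1,0))}, by decide, by decide⟩
    by_cases hc3 : n = 3
    · subst hc3; exact ⟨{((1,1),(1,0)), ((1,3),(1,0))}, by decide, by decide⟩
    by_cases hc4 : n = 4
    · subst hc4
      exact ⟨{((1,1),(1,0)), ((4,1),(0,1)), ((3,4),(1,0)), ((1,3),(0,1))}, by decide, by decide⟩
    by_cases hc5 : n = 5
    · subst hc5
      exact ⟨{((1,1),(1,0)), ((4,1),(1,0)), ((1,3),(1,0)), ((4,3),(1,0)), ((1,5),(1,0)),
        ((4,5),(1,0))}, by decide, by decide⟩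
    by_cases hc6 : n = 6
    · subst hc6
      exact ⟨{((1,1),(1,0)), ((1,3),(1,0)), ((1,5),(0,1)), ((3,5),(0,1)),
        ((4,1),(0,1)), ((5,4),(1,0)), ((5,6),(1,0)), ((6,1),(0,1))}, by decide, by decide⟩
    -- n ≥ 7
    have hn7 : 7 ≤ n := by omega
    set m := n - 6 with hm
    have hmn : n = m + 6 := by omega
    obtain ⟨C0, hC0, hcard0⟩ := ih m (by omega) (by omega)
    -- strip A : 6 × (m+1), translated to x ∈ [m+1, m+6]
    obtain ⟨SA0, hSA0, hcardA⟩ := strip (m + 1) (by omega)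
    obtain ⟨hSA, hcardA'⟩ := good_tr hSA0 ((m:ℤ)+1, 0)
    have eA1 : ((0,0) : ℤ × ℤ) + ((m:ℤ)+1, 0) = ((m:ℤ)+1, 0) := by simp
    have eA2 : ((5, ((m+1:ℕ):ℤ)-1) + ((m:ℤ)+1, 0) : ℤ × ℤ) = ((m:ℤ)+6, (m:ℤ)) := by
      simp [Prod.ext_iff]
      omega
    rw [eA1, eA2] at hSA
    -- strip B : (m+7) × 6, swapped and translated to y ∈ [m+1, m+6]
    obtain ⟨SB0, hSB0, hcardB⟩ := strip (m + 7) (by omega)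
    obtain ⟨hSB1, hcardB1⟩ := good_sw hSB0
    have eB1 : ((0,0) : ℤ × ℤ).swap = (0,0) := by simp
    have eB2 : ((5, ((m+7:ℕ):ℤ)-1) : ℤ × ℤ).swap = ((m:ℤ)+6, 5) := by
      simp [Prod.ext_iff]
      omega
    rw [eB1, eB2] at hSB1
    obtain ⟨hSB, hcardB'⟩ := good_tr hSB1 (0, (m:ℤ)+1)
    have eB3 : ((0,0) : ℤ × ℤ) + (0, (m:ℤ)+1) = (0, (m:ℤ)+1) := by simp
    have eB4 : (((m:ℤ)+6, 5) + (0, (m:ℤ)+1) : ℤ × ℤ) = ((m:ℤ)+6, (m:ℤ)+6) := by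
      simp [Prod.ext_iff]
      omega
    rw [eB3, eB4] at hSB
    -- unions
    obtain ⟨hU1, hcU1⟩ := good_union (A := (0,0)) (B := ((m:ℤ)+6, (m:ℤ))) hC0 hSA
      (disjoint_Icc_x (show (m:ℤ) < (m:ℤ)+1 by omega))
      (Icc_mono (by omega) (by omega) (show (m:ℤ) ≤ (m:ℤ)+6 by omega) (by omega))
      (Icc_mono (by omega) (by omega) (by omega) (by omega))
    obtain ⟨hU2, hcU2⟩ := good_union (A := (0,0)) (B := ((m:ℤ)+6, (m:ℤ)+6)) hU1 hSB
      (disjoint_Icc_y (show (m:ℤ) < (m:ℤ)+1 by omega))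
      (Icc_mono (by omega) (by omega) (by omega) (show (m:ℤ) ≤ (m:ℤ)+6 by omega))
      (Icc_mono (by omega) (by omega) (by omega) (by omega))
    have hnm : ((n:ℤ), (n:ℤ)) = ((m:ℤ)+6, (m:ℤ)+6) := by
      simp [Prod.ext_iff]
      omega
    refine ⟨_, by rw [hnm]; exact hU2, ?_⟩
    rw [hcU2, hcU1, hcard0, hcardA', hcardA, hcardB', hcardB1, hcardB]
    have e5 : (n+1)^2 = (m+1)^2 + 6*((m+1) + (m+7)) := by rw [hmn]; ring
    generalize hq : (m+1)^2 = q at *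
    omega

/-! ### Transfer between Good packings and configurations -/

lemma config_of_good {n : ℕ} {C : Finset ((ℤ × ℤ) × (ℤ × ℤ))}
    (h : Good (0,0) ((n:ℤ), (n:ℤ)) C) : IsSquareConfig n C := by
  obtain ⟨o, r, p⟩ := h
  refine ⟨o, ?_, ?_⟩
  · intro d hd x hx
    have ho := o d hd
    have hor : (0:ℤ) ≤ d.2.1 ∧ d.2.1 ≤ 1 ∧ (0:ℤ) ≤ d.2.2 ∧ d.2.2 ≤ 1 := by
      rcases ho with h | h <;> rw [h] <;>
        exact ⟨by norm_num, by norm_num, by norm_num, by norm_num⟩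
    have h1 : d.1 - (1,1) ∈ box d := by
      rw [mem_box]
      show (d.1.1 - 1 ≤ d.1.1 - 1 ∧ d.1.2 - 1 ≤ d.1.2 - 1) ∧
        (d.1.1 - 1 ≤ d.1.1 + d.2.1 ∧ d.1.2 - 1 ≤ d.1.2 + d.2.2)
      omega
    have h2 : d.1 + d.2 ∈ box d := by
      rw [mem_box]
      show (d.1.1 - 1 ≤ d.1.1 + d.2.1 ∧ d.1.2 - 1 ≤ d.1.2 + d.2.2) ∧
        (d.1.1 + d.2.1 ≤ d.1.1 + d.2.1 ∧ d.1.2 + d.2.2 ≤ d.1.2 + d.2.2)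
      omega
    have g1 := Finset.mem_Icc.mp (r d hd h1)
    have g2 := Finset.mem_Icc.mp (r d hd h2)
    have G1 : ((0:ℤ) ≤ d.1.1 - 1 ∧ (0:ℤ) ≤ d.1.2 - 1) ∧ (d.1.1 - 1 ≤ (n:ℤ) ∧ d.1.2 - 1 ≤ (n:ℤ)) :=
      ⟨⟨g1.1.1, g1.1.2⟩, g1.2.1, g1.2.2⟩
    have G2 : ((0:ℤ) ≤ d.1.1 + d.2.1 ∧ (0:ℤ) ≤ d.1.2 + d.2.2) ∧
        (d.1.1 + d.2.1 ≤ (n:ℤ) ∧ d.1.2 + d.2.2 ≤ (n:ℤ)) :=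
      ⟨⟨g2.1.1, g2.1.2⟩, g2.2.1, g2.2.2⟩
    have hx' : x = d.1 ∨ x = d.1 + d.2 := hx
    rcases hx' with rfl | rfl
    · show 1 ≤ d.1.1 ∧ d.1.1 ≤ (n:ℤ) ∧ 1 ≤ d.1.2 ∧ d.1.2 ≤ (n:ℤ)
      omega
    · show 1 ≤ d.1.1 + d.2.1 ∧ d.1.1 + d.2.1 ≤ (n:ℤ) ∧ 1 ≤ d.1.2 + d.2.2 ∧ d.1.2 + d.2.2 ≤ (n:ℤ)
      omega
  · intro d hd d' hd' hne
    exact excl_of_disjoint (o d hd) (o d' hd') (p d hd d' hd' hne)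

lemma card_le_bound {n : ℕ} {C : Finset ((ℤ × ℤ) × (ℤ × ℤ))}
    (h : IsSquareConfig n C) : C.card ≤ (n+1)^2/6 := by
  obtain ⟨o, r, p⟩ := h
  have hdisj : ∀ d ∈ C, ∀ d' ∈ C, d ≠ d' → Disjoint (box d) (box d') :=
    fun d hd d' hd' hne => disjoint_of_excl (o d hd) (o d' hd') (p d hd d' hd' hne)
  have hsub : C.biUnion box ⊆ Finset.Icc ((0:ℤ),(0:ℤ)) ((n:ℤ),(n:ℤ)) := by
    intro q hq
    obtain ⟨d, hd, hq⟩ := Finset.mem_biUnion.mp hq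
    rw [mem_box] at hq
    have g1 := r d hd (show d.1 ∈ kernel d from Or.inl rfl)
    have g2 := r d hd (show d.1 + d.2 ∈ kernel d from Or.inr rfl)
    simp only [Set.mem_setOf_eq, Prod.fst_add, Prod.snd_add] at g1 g2
    rw [Finset.mem_Icc]
    show ((0:ℤ) ≤ q.1 ∧ (0:ℤ) ≤ q.2) ∧ (q.1 ≤ (n:ℤ) ∧ q.2 ≤ (n:ℤ))
    omega
  have hbig : (C.biUnion box).card = 6 * C.card := by
    rw [Finset.card_biUnion hdisj, Finset.sum_congr rfl (fun d hd => card_box (o d hd)),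
      Finset.sum_const, smul_eq_mul, mul_comm]
  have htot : (Finset.Icc ((0:ℤ),(0:ℤ)) ((n:ℤ),(n:ℤ))).card = (n+1)^2 := by
    rw [Finset.card_Icc_prod]
    simp only [Int.card_Icc]
    have : ((n:ℤ) + 1 - 0).toNat = n + 1 := by omega
    rw [this, pow_two]
  have := Finset.card_le_card hsub
  rw [hbig, htot] at this
  rw [Nat.le_div_iff_mul_le (by norm_num)]
  omega

/-! ### Arithmetic: `xi n = ⌊(n+1)²/6⌋` -/

lemma xi_eq (n : ℕ) : xi n = (n+1)^2/6 := by
  unfold xi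
  set k := n / 6 with hk
  have h : n % 6 = 0 ∨ n % 6 = 1 ∨ n % 6 = 2 ∨ n % 6 = 3 ∨ n % 6 = 4 ∨ n % 6 = 5 := by omega
  rcases h with h | h | h | h | h | h
  · rw [if_neg (by omega), if_neg (by omega), if_neg (by omega)]
    have a1 : n = 6*k := by omega
    have e1 : n * (n+2) = 6*(k*(6*k+2)) := by rw [a1]; ring
    have e2 : (n+1)^2 = 6*(k*(6*k+2)) + 1 := by rw [a1]; ring
    rw [e1, e2]
    generalize k*(6*k+2) = K
    omega
  · rw [if_pos (Or.inl h)]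
    have a1 : n - 1 = 6*k := by omega
    have a2 : n + 3 = 6*k + 4 := by omega
    have a3 : n + 1 = 6*k + 2 := by omega
    have e1 : (n-1) * (n+3) = 6*(k*(6*k+4)) := by rw [a1, a2]; ring
    have e2 : (n+1)^2 = 6*(k*(6*k+4)) + 4 := by rw [a3]; ring
    rw [e1, e2]
    generalize k*(6*k+4) = K
    omega
  · rw [if_neg (by omega), if_neg (by omega), if_pos h]
    have a1 : n = 6*k + 2 := by omega
    have e1 : n * (n+2) - 2 = 6*(6*k*k+6*k+1) := by
      have : n * (n+2) = 6*(6*k*k+6*k+1) + 2 := by rw [a1]; ring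
      omega
    have e2 : (n+1)^2 = 6*(6*k*k+6*k+1) + 3 := by rw [a1]; ring
    rw [e1, e2]
    generalize 6*k*k+6*k+1 = K
    omega
  · rw [if_pos (Or.inr h)]
    have a1 : n - 1 = 6*k + 2 := by omega
    have a2 : n + 3 = 6*k + 6 := by omega
    have a3 : n + 1 = 6*k + 4 := by omega
    have e1 : (n-1) * (n+3) = 6*(6*k*k+8*k+2) := by rw [a1, a2]; ring
    have e2 : (n+1)^2 = 6*(6*k*k+8*k+2) + 4 := by rw [a3]; ring
    rw [e1, e2]
    generalize 6*k*k+8*k+2 = K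
    omega
  · rw [if_neg (by omega), if_neg (by omega), if_neg (by omega)]
    have a1 : n = 6*k + 4 := by omega
    have e1 : n * (n+2) = 6*(6*k*k+10*k+4) := by rw [a1]; ring
    have e2 : (n+1)^2 = 6*(6*k*k+10*k+4) + 1 := by rw [a1]; ring
    rw [e1, e2]
    generalize 6*k*k+10*k+4 = K
    omega
  · rw [if_neg (by omega), if_pos h]

/-- For every `n ≥ 1`, the maximum cardinality of a domino configuration in the
square `S_n` equals `ξ n`: some configuration attains `ξ n`, and every
configuration has at most `ξ n` dominos. -/
theorem max_dominos_in_square (n : ℕ) (hn : 1 ≤ n) :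
    (∃ C : Finset ((ℤ × ℤ) × (ℤ × ℤ)), IsSquareConfig n C ∧ C.card = xi n) ∧
    (∀ C : Finset ((ℤ × ℤ) × (ℤ × ℤ)), IsSquareConfig n C → C.card ≤ xi n) := by
  constructor
  · obtain ⟨C, hC, hcard⟩ := pack n hn
    exact ⟨C, config_of_good hC, by rw [hcard, xi_eq]⟩
  · intro C hC
    rw [xi_eq]
    exact card_le_bound hC
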